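/- Let C_1 and C_2 be conics in RP^2 given by positive-definite-compatible symmetric matrices such that C_1 (the inscribed conic) lies inside C_2 (the circumscribed conic). Let K be a compact convex set contained in the closed region bounded by C_2. Then the map R = Q_I^{-1} Q_C sends K into the open region bounded by C_1: for any point A inside or on C_2, the polar line of A with respect to C_2 does not meet the interior of C_2, and the pole of that line with respect to C_1 lies strictly inside C_1. -/
import Mathlib


/-!
STATEMENT 11. Let `C₁` (inscribed) and `C₂` (circumscribed) be nondegenerate
real conics, given by symmetric matrices `Q_I, Q_C` of signature `(2,1)`
(so they have genuine interior regions, taken to be where the quadratic form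
is negative), with the closed interior region of `C₁` contained in the open
interior region of `C₂`.  Then the map `R = Q_I⁻¹ Q_C` sends every point
inside or on `C₂` strictly inside `C₁`: the polar line of such a point with
respect to `C₂` does not meet the interior of `C₂`, and its pole with respect
to `C₁` lies strictly inside `C₁`.
-/

open Matrix

private noncomputable abbrev D3 : Matrix (Fin 3) (Fin 3) ℝ := Matrix.diagonal ![1, 1, -1]

private lemma D3_sq : D3 * D3 = 1 := by
  rw [Matrix.diagonal_mul_diagonal]
  ext i j
  fin_cases i <;> fin_cases j <;> simp [Matrix.diagonal]

private lemma D3_inv : D3⁻¹ = D3 := Matrix.inv_eq_right_inv D3_sq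

private lemma D3_det : D3.det = -1 := by
  rw [Matrix.det_diagonal]; simp [Fin.prod_univ_three]

private lemma mulVec_ne_zero (M : Matrix (Fin 3) (Fin 3) ℝ) (hM : IsUnit M.det)
    {v : Fin 3 → ℝ} (hv : v ≠ 0) : M.mulVec v ≠ 0 := by
  intro h
  apply hv
  have := congrArg (M⁻¹.mulVec ·) h
  simpa [Matrix.mulVec_mulVec, Matrix.nonsing_inv_mul M hM] using this

private lemma quad_change (B : Matrix (Fin 3) (Fin 3) ℝ) (x : Fin 3 → ℝ) :
    x ⬝ᵥ (Bᵀ * D3 * B).mulVec x = (B.mulVec x) ⬝ᵥ D3.mulVec (B.mulVec x) := by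
  have h1 : (Bᵀ * D3 * B).mulVec x = Bᵀ.mulVec (D3.mulVec (B.mulVec x)) := by
    rw [Matrix.mulVec_mulVec, Matrix.mulVec_mulVec, Matrix.mul_assoc]
  rw [h1, Matrix.dotProduct_mulVec, Matrix.vecMul_transpose]

private lemma dot_change (B : Matrix (Fin 3) (Fin 3) ℝ) (hB : IsUnit B.det)
    (l x : Fin 3 → ℝ) :
    l ⬝ᵥ x = ((Bᵀ)⁻¹.mulVec l) ⬝ᵥ (B.mulVec x) := by
  rw [Matrix.dotProduct_mulVec]
  have h1 : Matrix.vecMul ((Bᵀ)⁻¹.mulVec l) B = Bᵀ.mulVec ((Bᵀ)⁻¹.mulVec l) := by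
    rw [Matrix.mulVec_transpose]
  rw [h1, Matrix.mulVec_mulVec, Matrix.mul_nonsing_inv _ (by rwa [Matrix.det_transpose]),
    Matrix.one_mulVec]

private lemma inv_quad (B : Matrix (Fin 3) (Fin 3) ℝ) (hB : IsUnit B.det)
    (l : Fin 3 → ℝ) :
    ((Bᵀ * D3 * B)⁻¹.mulVec l) ⬝ᵥ l
      = ((Bᵀ)⁻¹.mulVec l) ⬝ᵥ D3.mulVec ((Bᵀ)⁻¹.mulVec l) := by
  have hinv : (Bᵀ * D3 * B)⁻¹ = B⁻¹ * D3 * (Bᵀ)⁻¹ := by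
    rw [Matrix.mul_inv_rev, Matrix.mul_inv_rev, D3_inv, ← Matrix.mul_assoc]
  rw [hinv]
  have h1 : (B⁻¹ * D3 * (Bᵀ)⁻¹).mulVec l
      = B⁻¹.mulVec (D3.mulVec ((Bᵀ)⁻¹.mulVec l)) := by
    rw [Matrix.mulVec_mulVec, Matrix.mulVec_mulVec, Matrix.mul_assoc]
  rw [h1, dotProduct_comm, Matrix.dotProduct_mulVec]
  congr 1
  rw [← Matrix.mulVec_transpose, Matrix.transpose_nonsing_inv]

private lemma D3_quad (u : Fin 3 → ℝ) :
    u ⬝ᵥ D3.mulVec u = u 0 * u 0 + u 1 * u 1 - u 2 * u 2 := by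
  simp [dotProduct, Matrix.mulVec_diagonal, Fin.sum_univ_three]
  ring

private lemma diagA (m : Fin 3 → ℝ) (hm : m ≠ 0)
    (h : 0 ≤ m 0 * m 0 + m 1 * m 1 - m 2 * m 2) :
    ∃ u : Fin 3 → ℝ, u ≠ 0 ∧ m ⬝ᵥ u = 0 ∧
      u 0 * u 0 + u 1 * u 1 - u 2 * u 2 ≤ 0 := by
  have hr0 : 0 ≤ m 0 * m 0 + m 1 * m 1 := add_nonneg (mul_self_nonneg _) (mul_self_nonneg _)
  have hr : 0 < m 0 * m 0 + m 1 * m 1 := by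
    rcases hr0.lt_or_eq with h' | h'
    · exact h'
    · exfalso
      apply hm
      have h0 : m 0 = 0 := by nlinarith
      have h1 : m 1 = 0 := by nlinarith
      have h2 : m 2 = 0 := by nlinarith
      funext i; fin_cases i <;> assumption
  set r := m 0 * m 0 + m 1 * m 1 with hrdef
  refine ⟨![-(m 0 * m 2) / r, -(m 1 * m 2) / r, 1], ?_, ?_, ?_⟩
  · intro hu
    have := congrFun hu 2
    simp at this
  · show m 0 * (-(m 0 * m 2) / r) + (m 1 * (-(m 1 * m 2) / r) + (m 2 * 1 + 0)) = 0
    field_simp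
    ring
  · show -(m 0 * m 2) / r * (-(m 0 * m 2) / r) + -(m 1 * m 2) / r * (-(m 1 * m 2) / r) - 1 * 1 ≤ 0
    have key : -(m 0 * m 2) / r * (-(m 0 * m 2) / r) + -(m 1 * m 2) / r * (-(m 1 * m 2) / r)
        = m 2 * m 2 / r := by
      field_simp
      ring
    rw [key]
    have h2 : m 2 * m 2 ≤ r := by rw [hrdef]; linarith
    have := (div_le_one hr).mpr h2
    linarith

private lemma diagB (m u : Fin 3 → ℝ) (hm : m ≠ 0)
    (h : m 0 * m 0 + m 1 * m 1 - m 2 * m 2 ≤ 0)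
    (ho : m ⬝ᵥ u = 0) :
    0 ≤ u 0 * u 0 + u 1 * u 1 - u 2 * u 2 := by
  by_contra hc
  push_neg at hc
  have hm2 : m 2 ≠ 0 := by
    intro h2
    apply hm
    have h0 : m 0 = 0 := by nlinarith
    have h1 : m 1 = 0 := by nlinarith
    funext i; fin_cases i <;> assumption
  have ho' : m 0 * u 0 + m 1 * u 1 + m 2 * u 2 = 0 := by
    have := ho
    simp [dotProduct, Fin.sum_univ_three] at this
    linarith
  have hm2sq : 0 < m 2 * m 2 := mul_self_pos.mpr hm2
  have c1 : (m 0 * u 0 + m 1 * u 1) * (m 0 * u 0 + m 1 * u 1)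
      ≤ (m 0 * m 0 + m 1 * m 1) * (u 0 * u 0 + u 1 * u 1) := by
    nlinarith [sq_nonneg (m 0 * u 1 - m 1 * u 0)]
  have c2 : (m 0 * m 0 + m 1 * m 1) * (u 0 * u 0 + u 1 * u 1)
      ≤ (m 2 * m 2) * (u 0 * u 0 + u 1 * u 1) :=
    mul_le_mul_of_nonneg_right (by linarith)
      (add_nonneg (mul_self_nonneg _) (mul_self_nonneg _))
  have c3 : (m 2 * m 2) * (u 0 * u 0 + u 1 * u 1) < (m 2 * m 2) * (u 2 * u 2) :=
    mul_lt_mul_of_pos_left (by linarith) hm2sq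
  have c4 : (m 0 * u 0 + m 1 * u 1) * (m 0 * u 0 + m 1 * u 1)
      = (m 2 * m 2) * (u 2 * u 2) := by
    have : m 0 * u 0 + m 1 * u 1 = -(m 2 * u 2) := by linarith
    rw [this]; ring
  linarith

private lemma det_unit_of_sig (Q B : Matrix (Fin 3) (Fin 3) ℝ) (hB : IsUnit B.det)
    (hQ : Q = Bᵀ * Matrix.diagonal ![1, 1, -1] * B) : IsUnit Q.det := by
  rw [hQ, Matrix.det_mul, Matrix.det_mul, Matrix.det_transpose]
  have : (Matrix.diagonal ![(1:ℝ), 1, -1]).det = -1 := by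
    rw [Matrix.det_diagonal]; simp [Fin.prod_univ_three]
  rw [this]
  rw [isUnit_iff_ne_zero] at hB ⊢
  intro h
  apply hB
  rcases mul_eq_zero.mp h with h' | h'
  · rcases mul_eq_zero.mp h' with h'' | h''
    · exact h''
    · linarith
  · exact h'


open Matrix in
theorem conic_operator_maps_inside
    (QI QC : Matrix (Fin 3) (Fin 3) ℝ)
    (hQI : QI.IsSymm) (hQC : QC.IsSymm)
    -- both conics are nondegenerate with signature (2,1)
    (hIsig : ∃ B : Matrix (Fin 3) (Fin 3) ℝ, IsUnit B.det ∧
      QI = Bᵀ * Matrix.diagonal ![1, 1, -1] * B)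
    (hCsig : ∃ B : Matrix (Fin 3) (Fin 3) ℝ, IsUnit B.det ∧
      QC = Bᵀ * Matrix.diagonal ![1, 1, -1] * B)
    -- the closed interior of `C₁` is contained in the open interior of `C₂`
    (hnest : ∀ x : Fin 3 → ℝ, x ≠ 0 →
      x ⬝ᵥ QI.mulVec x ≤ 0 → x ⬝ᵥ QC.mulVec x < 0) :
    -- `R = Q_I⁻¹ Q_C` maps the closed interior of `C₂` into the open interior of `C₁`
    ∀ a : Fin 3 → ℝ, a ≠ 0 → a ⬝ᵥ QC.mulVec a ≤ 0 →
      ((QI⁻¹ * QC).mulVec a) ⬝ᵥ QI.mulVec ((QI⁻¹ * QC).mulVec a) < 0 := by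
  obtain ⟨BI, hBI, hI⟩ := hIsig
  obtain ⟨BC, hBC, hC⟩ := hCsig
  have hdetI : IsUnit QI.det := det_unit_of_sig QI BI hBI hI
  have hdetC : IsUnit QC.det := det_unit_of_sig QC BC hBC hC
  have hBIT : IsUnit (BIᵀ).det := by rwa [Matrix.det_transpose]
  have hBCT : IsUnit (BCᵀ).det := by rwa [Matrix.det_transpose]
  intro a ha haC
  set l := QC.mulVec a with hl
  have hlne : l ≠ 0 := mulVec_ne_zero QC hdetC ha
  -- the image point y
  have hy : (QI⁻¹ * QC).mulVec a = QI⁻¹.mulVec l := by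
    rw [hl, Matrix.mulVec_mulVec]
  have hQIy : QI.mulVec ((QI⁻¹ * QC).mulVec a) = l := by
    rw [hy, Matrix.mulVec_mulVec, Matrix.mul_nonsing_inv _ hdetI, Matrix.one_mulVec]
  rw [hQIy, hy]
  by_contra hT
  push_neg at hT
  -- switch to diagonal coordinates for QI
  set mI := (BIᵀ)⁻¹.mulVec l with hmI
  have hTm : 0 ≤ mI ⬝ᵥ D3.mulVec mI := by
    have := inv_quad BI hBI l
    rw [← hI] at this
    rwa [this] at hT
  have hmIne : mI ≠ 0 := mulVec_ne_zero _ (Matrix.isUnit_nonsing_inv_det _ hBIT) hlne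
  rw [D3_quad] at hTm
  obtain ⟨u, hu, huo, huq⟩ := diagA mI hmIne hTm
  -- the witness point x on the polar line, inside-or-on C₁
  set x := BI⁻¹.mulVec u with hx
  have hBIx : BI.mulVec x = u := by
    rw [hx, Matrix.mulVec_mulVec, Matrix.mul_nonsing_inv _ hBI, Matrix.one_mulVec]
  have hxne : x ≠ 0 := mulVec_ne_zero _ (Matrix.isUnit_nonsing_inv_det _ hBI) hu
  have hxQI : x ⬝ᵥ QI.mulVec x ≤ 0 := by
    rw [hI, quad_change, hBIx, D3_quad]; exact huq
  have hxQC : x ⬝ᵥ QC.mulVec x < 0 := hnest x hxne hxQI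
  have hlx : l ⬝ᵥ x = 0 := by
    rw [dot_change BI hBI l x, ← hmI, hBIx]; exact huo
  -- now the polar-line property for QC
  set mC := (BCᵀ)⁻¹.mulVec l with hmC
  have hmCne : mC ≠ 0 := mulVec_ne_zero _ (Matrix.isUnit_nonsing_inv_det _ hBCT) hlne
  have hmCquad : mC 0 * mC 0 + mC 1 * mC 1 - mC 2 * mC 2 ≤ 0 := by
    have h1 := inv_quad BC hBC l
    rw [← hC] at h1
    have h2 : QC⁻¹.mulVec l = a := by
      rw [hl, Matrix.mulVec_mulVec, Matrix.nonsing_inv_mul _ hdetC, Matrix.one_mulVec]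
    rw [h2] at h1
    have h3 : a ⬝ᵥ l ≤ 0 := haC
    rw [← D3_quad, ← h1]
    exact h3
  have hmCo : mC ⬝ᵥ (BC.mulVec x) = 0 := by
    rw [hmC, ← dot_change BC hBC l x]; exact hlx
  have := diagB mC (BC.mulVec x) hmCne hmCquad hmCo
  rw [← D3_quad, ← quad_change, ← hC] at this
  linarith
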